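/- Given piecewise-linear cone data (ι, σ, m, φ), for Lebesgue-almost every y ∈ E the function φ is differentiable at y and gradient φ y ∈ {m i : y ∈ σ i}. -/

import Mathlib

open RealInnerProductSpace MeasureTheory

/-- Given piecewise-linear cone data `(ι, σ, m, φ)`, for Lebesgue-almost every `y` the
function `φ` is differentiable at `y` and `gradient φ y` is one of the `m i` with `y ∈ σ i`. -/
theorem support_function_ae_gradient
    (n : ℕ) (hn : 1 ≤ n)
    (ι : Type*) [Fintype ι] [Nonempty ι]
    (σ : ι → Set (EuclideanSpace ℝ (Fin n)))
    (hσ_closed : ∀ i, IsClosed (σ i))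
    (hσ_convex : ∀ i, Convex ℝ (σ i))
    (hσ_cone : ∀ i, ∀ t : ℝ, 0 ≤ t → ∀ x ∈ σ i, t • x ∈ σ i)
    (hσ_cover : (⋃ i, σ i) = Set.univ)
    (m : ι → EuclideanSpace ℝ (Fin n))
    (φ : EuclideanSpace ℝ (Fin n) → ℝ)
    (hφ_cont : Continuous φ)
    (hφ : ∀ i, ∀ x ∈ σ i, φ x = ⟪m i, x⟫) :
    ∀ᵐ y : EuclideanSpace ℝ (Fin n) ∂volume,
      DifferentiableAt ℝ φ y ∧ ∃ i, y ∈ σ i ∧ gradient φ y = m i := by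
  have hnull : volume (⋃ i, frontier (σ i)) = 0 :=
    measure_iUnion_null fun i => (hσ_convex i).addHaar_frontier volume
  filter_upwards [measure_eq_zero_iff_ae_notMem.mp hnull] with y hy
  have hy2 : y ∈ ⋃ i, σ i := hσ_cover.symm ▸ Set.mem_univ y
  obtain ⟨i, hyi⟩ := Set.mem_iUnion.mp hy2
  have hy' : y ∉ frontier (σ i) := fun h => hy (Set.mem_iUnion.mpr ⟨i, h⟩)
  have hyint : y ∈ interior (σ i) := by
    by_contra h
    exact hy' ⟨subset_closure hyi, h⟩
  have heq : φ =ᶠ[nhds y] fun x => ⟪m i, x⟫ :=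
    Filter.eventuallyEq_of_mem (isOpen_interior.mem_nhds hyint)
      fun x hx => hφ i x (interior_subset hx)
  have h1 : HasFDerivAt (fun x : EuclideanSpace ℝ (Fin n) => ⟪m i, x⟫)
      ((InnerProductSpace.toDual ℝ (EuclideanSpace ℝ (Fin n))) (m i)) y := by
    exact
      ((InnerProductSpace.toDual ℝ (EuclideanSpace ℝ (Fin n))) (m i)).hasFDerivAt (x := y)
  have h2 := h1.congr_of_eventuallyEq heq
  have hg : HasGradientAt φ (m i) y := hasGradientAt_iff_hasFDerivAt.mpr h2
  exact ⟨hg.hasFDerivAt.differentiableAt, i, hyi, hg.gradient⟩
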